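/- arXiv:1703.08473 — 5 statements merged into one kernel-verified Lean document; each statement's English description precedes it below -/
import Mathlib

section
/- Let D be a finite admissible set of primes contained in [1, M] for a function a : ℕ → ℤ satisfying |a(p)| ≤ 2 p^((2k-1)/2) for all primes p. Then binomial(|D|, k) ≤ 4k·M^((2k-1)/2) + 1; consequently |D| ≪_k M^((2k-1)/(2k)). -/
/-- Admissibility: no two distinct strictly increasing `k`-tuples from `D` have equal
sums of `a`-values. -/
def Admissible (k : ℕ) (a : ℕ → ℤ) (D : Finset ℕ) : Prop :=
  ∀ q : ℕ → ℕ,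
    (∀ i ∈ Finset.Icc 1 (2 * k), q i ∈ D) →
    (∀ i j, 1 ≤ i → i < j → j ≤ k → q i < q j) →
    (∀ i j, k + 1 ≤ i → i < j → j ≤ 2 * k → q i < q j) →
    (∃ i ∈ Finset.Icc 1 k, q i ≠ q (k + i)) →
    ∑ i ∈ Finset.Icc 1 k, a (q i) ≠ ∑ i ∈ Finset.Icc (k + 1) (2 * k), a (q i)

lemma sum_fin_eq (k : ℕ) (a : ℕ → ℤ) (S : Finset ℕ) (hS : S.card = k) :
    ∑ j : Fin k, a (S.orderEmbOfFin hS j) = ∑ p ∈ S, a p := by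
  apply Finset.sum_bij (fun j _ => S.orderEmbOfFin hS j)
  · intro j _; exact Finset.orderEmbOfFin_mem S hS j
  · intro i _ j _ h; exact (S.orderEmbOfFin hS).injective h
  · intro p hp
    have : p ∈ Set.range (S.orderEmbOfFin hS) := by
      rw [Finset.range_orderEmbOfFin]; exact hp
    obtain ⟨j, hj⟩ := this
    exact ⟨j, Finset.mem_univ j, hj⟩
  · intro j _; rfl

lemma inj_sums (k : ℕ) (hk : 1 ≤ k) (a : ℕ → ℤ) (D : Finset ℕ)
    (hadm : Admissible k a D) :
    ∀ S ∈ D.powersetCard k, ∀ T ∈ D.powersetCard k,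
      (∑ p ∈ S, a p) = (∑ p ∈ T, a p) → S = T := by
  intro S hS T hT hsum
  by_contra hST
  rw [Finset.mem_powersetCard] at hS hT
  obtain ⟨hSD, hSc⟩ := hS
  obtain ⟨hTD, hTc⟩ := hT
  set f := S.orderEmbOfFin hSc with hf
  set g := T.orderEmbOfFin hTc with hg
  set q : ℕ → ℕ := fun i =>
    if h : 1 ≤ i ∧ i ≤ k then f ⟨i - 1, by omega⟩
    else if h2 : k + 1 ≤ i ∧ i ≤ 2 * k then g ⟨i - k - 1, by omega⟩
    else 0 with hq
  have hq1 : ∀ i (h1 : 1 ≤ i) (h2 : i ≤ k) (j : Fin k), (j : ℕ) = i - 1 → q i = f j := by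
    intro i h1 h2 j hj
    have : j = ⟨i - 1, by omega⟩ := Fin.ext hj
    rw [this]
    simp only [hq]
    rw [dif_pos ⟨h1, h2⟩]
  have hq2 : ∀ i (h1 : k + 1 ≤ i) (h2 : i ≤ 2 * k) (j : Fin k), (j : ℕ) = i - k - 1 →
      q i = g j := by
    intro i h1 h2 j hj
    have : j = ⟨i - k - 1, by omega⟩ := Fin.ext hj
    rw [this]
    simp only [hq]
    rw [dif_neg (by omega), dif_pos ⟨h1, h2⟩]
  have hsum1 : ∑ i ∈ Finset.Icc 1 k, a (q i) = ∑ p ∈ S, a p := by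
    rw [← sum_fin_eq k a S hSc]
    refine Finset.sum_nbij' (i := fun i => (⟨min (i - 1) (k - 1), by omega⟩ : Fin k))
      (j := fun j => (j : ℕ) + 1) ?_ ?_ ?_ ?_ ?_
    · intro i _; exact Finset.mem_univ _
    · intro j _; have := j.isLt; simp only [Finset.mem_Icc]; omega
    · intro i hi; simp only [Finset.mem_Icc] at hi; simp; omega
    · intro j _; have := j.isLt; ext; simp; omega
    · intro i hi
      simp only [Finset.mem_Icc] at hi
      exact congrArg a (hq1 i hi.1 hi.2 _ (by simp; omega))
  have hsum2 : ∑ i ∈ Finset.Icc (k + 1) (2 * k), a (q i) = ∑ p ∈ T, a p := by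
    rw [← sum_fin_eq k a T hTc]
    refine Finset.sum_nbij' (i := fun i => (⟨min (i - k - 1) (k - 1), by omega⟩ : Fin k))
      (j := fun j => (j : ℕ) + k + 1) ?_ ?_ ?_ ?_ ?_
    · intro i _; exact Finset.mem_univ _
    · intro j _; have := j.isLt; simp only [Finset.mem_Icc]; omega
    · intro i hi; simp only [Finset.mem_Icc] at hi; simp; omega
    · intro j _; have := j.isLt; ext; simp; omega
    · intro i hi
      simp only [Finset.mem_Icc] at hi
      exact congrArg a (hq2 i hi.1 hi.2 _ (by simp; omega))
  refine hadm q ?_ ?_ ?_ ?_ (by rw [hsum1, hsum2, hsum])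
  · intro i hi
    simp only [Finset.mem_Icc] at hi
    by_cases h : i ≤ k
    · rw [hq1 i hi.1 h ⟨i - 1, by omega⟩ rfl]
      exact hSD (Finset.orderEmbOfFin_mem S hSc _)
    · rw [hq2 i (by omega) hi.2 ⟨i - k - 1, by omega⟩ rfl]
      exact hTD (Finset.orderEmbOfFin_mem T hTc _)
  · intro i j h1 h2 h3
    rw [hq1 i h1 (by omega) ⟨i - 1, by omega⟩ rfl, hq1 j (by omega) h3 ⟨j - 1, by omega⟩ rfl]
    exact (S.orderEmbOfFin hSc).strictMono (by simp [Fin.mk_lt_mk]; omega)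
  · intro i j h1 h2 h3
    rw [hq2 i h1 (by omega) ⟨i - k - 1, by omega⟩ rfl,
      hq2 j (by omega) h3 ⟨j - k - 1, by omega⟩ rfl]
    exact (T.orderEmbOfFin hTc).strictMono (by simp [Fin.mk_lt_mk]; omega)
  · by_contra hc
    push_neg at hc
    apply hST
    have hfg : ∀ j : Fin k, f j = g j := by
      intro j
      have h1 := hc ((j : ℕ) + 1) (by simp only [Finset.mem_Icc]; have := j.isLt; omega)
      rw [hq1 ((j : ℕ) + 1) (by omega) (by have := j.isLt; omega) j (by omega),
        hq2 (k + ((j : ℕ) + 1)) (by omega) (by have := j.isLt; omega) j (by omega)] at h1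
      exact h1
    have hco : (⇑f : Fin k → ℕ) = ⇑g := funext hfg
    have : (S : Set ℕ) = (T : Set ℕ) := by
      rw [← Finset.range_orderEmbOfFin S hSc, ← Finset.range_orderEmbOfFin T hTc, ← hf, ← hg, hco]
    exact Finset.coe_injective this

/-- an admissible set of primes in `[1, M]` for coefficients obeying the
Deligne bound satisfies `binomial (|D|, k) ≤ 4k·M^((2k-1)/2) + 1`, and consequently
`|D| ≪_k M^((2k-1)/(2k))`. -/
theorem stmt_4 (k : ℕ) (hk : 1 ≤ k) :
    ∃ C : ℝ, 0 < C ∧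
      ∀ (M : ℝ), 2 ≤ M →
      ∀ (a : ℕ → ℤ),
        (∀ p : ℕ, p.Prime → (p : ℝ) ≤ M →
          |(a p : ℝ)| ≤ 2 * (p : ℝ) ^ ((2 * k - 1 : ℝ) / 2)) →
      ∀ (D : Finset ℕ), (∀ p ∈ D, Nat.Prime p ∧ 1 ≤ p ∧ (p : ℝ) ≤ M) →
        Admissible k a D →
        ((D.card.choose k : ℝ) ≤ 4 * k * M ^ ((2 * k - 1 : ℝ) / 2) + 1 ∧
          (D.card : ℝ) ≤ C * M ^ ((2 * k - 1 : ℝ) / (2 * k))) := by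
  classical
  have hk' : (1 : ℝ) ≤ k := by exact_mod_cast hk
  set A : ℝ := (k.factorial : ℝ) * (4 * k + 1) with hA
  have hApos : 0 < A := by positivity
  have hC : 0 < A ^ ((1 : ℝ) / k) + ((k : ℝ) - 1) := by
    have h1 := Real.rpow_pos_of_pos hApos ((1 : ℝ) / k)
    linarith
  refine ⟨A ^ ((1 : ℝ) / k) + ((k : ℝ) - 1), hC, ?_⟩
  intro M hM a ha D hD hadm
  set e : ℝ := (2 * k - 1 : ℝ) / 2 with he
  have he0 : 0 ≤ e := by rw [he]; linarith
  have hM0 : (0 : ℝ) < M := by linarith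
  have hMe1 : (1 : ℝ) ≤ M ^ e := Real.one_le_rpow (by linarith) he0
  have habs : ∀ S ∈ D.powersetCard k, |((∑ p ∈ S, a p : ℤ) : ℝ)| ≤ 2 * k * M ^ e := by
    intro S hS
    rw [Finset.mem_powersetCard] at hS
    push_cast
    calc |∑ p ∈ S, (a p : ℝ)| ≤ ∑ p ∈ S, |(a p : ℝ)| := Finset.abs_sum_le_sum_abs _ _
      _ ≤ ∑ _p ∈ S, 2 * M ^ e := by
          refine Finset.sum_le_sum fun p hp => ?_
          obtain ⟨hp1, _, hp3⟩ := hD p (hS.1 hp)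
          refine (ha p hp1 hp3).trans ?_
          have h2 : (p : ℝ) ^ e ≤ M ^ e :=
            Real.rpow_le_rpow (by positivity) hp3 he0
          linarith
      _ = 2 * k * M ^ e := by
          rw [Finset.sum_const, hS.2, nsmul_eq_mul]; ring
  set N : ℤ := ⌊2 * (k : ℝ) * M ^ e⌋ with hN
  have hNle : (N : ℝ) ≤ 2 * k * M ^ e := Int.floor_le _
  have hN0 : (0 : ℤ) ≤ N := Int.le_floor.mpr (by push_cast; positivity)
  have hsub : (D.powersetCard k).image (fun S => ∑ p ∈ S, a p) ⊆ Finset.Icc (-N) N := by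
    intro z hz
    simp only [Finset.mem_image] at hz
    obtain ⟨S, hS, rfl⟩ := hz
    have h := habs S hS
    rw [abs_le] at h
    rw [Finset.mem_Icc]
    constructor
    · rw [neg_le]
      refine Int.le_floor.mpr ?_
      have h1 := h.1
      push_cast at h1 ⊢
      linarith
    · refine Int.le_floor.mpr ?_
      linarith [h.2]
  have hinj : Set.InjOn (fun S => ∑ p ∈ S, a p) ↑(D.powersetCard k) := by
    intro S hS T hT h
    exact inj_sums k hk a D hadm S (by simpa using hS) T (by simpa using hT) h
  have hcard1 : D.card.choose k = ((D.powersetCard k).image (fun S => ∑ p ∈ S, a p)).card := by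
    rw [Finset.card_image_of_injOn hinj, Finset.card_powersetCard]
  have hcard2 : ((D.powersetCard k).image (fun S => ∑ p ∈ S, a p)).card ≤ (2 * N + 1).toNat := by
    refine (Finset.card_le_card hsub).trans ?_
    rw [Int.card_Icc]
    apply le_of_eq
    congr 1
    ring
  have hchoose : (D.card.choose k : ℝ) ≤ 4 * k * M ^ e + 1 := by
    have h1 : (D.card.choose k : ℝ) ≤ ((2 * N + 1).toNat : ℝ) := by
      exact_mod_cast hcard1 ▸ (Nat.cast_le.mpr hcard2)
    have h2 : ((2 * N + 1).toNat : ℝ) = 2 * (N : ℝ) + 1 := by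
      have h3 : ((2 * N + 1).toNat : ℤ) = 2 * N + 1 := Int.toNat_of_nonneg (by omega)
      have h4 : (((2 * N + 1).toNat : ℤ) : ℝ) = ((2 * N + 1 : ℤ) : ℝ) := by exact_mod_cast h3
      push_cast at h4
      exact h4
    rw [h2] at h1
    linarith
  refine ⟨hchoose, ?_⟩
  -- second part
  set n := D.card with hn
  have hpow : (((n + 1 - k : ℕ) : ℝ)) ^ k ≤ A * M ^ e := by
    have h1 : (((n + 1 - k : ℕ) : ℝ)) ^ k / (k.factorial : ℝ) ≤ (n.choose k : ℝ) :=
      Nat.pow_le_choose k n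
    have hkf : (0 : ℝ) < (k.factorial : ℝ) := by positivity
    have h2 : (((n + 1 - k : ℕ) : ℝ)) ^ k ≤ (k.factorial : ℝ) * (4 * k * M ^ e + 1) := by
      rw [div_le_iff₀ hkf] at h1
      calc (((n + 1 - k : ℕ) : ℝ)) ^ k ≤ (n.choose k : ℝ) * (k.factorial : ℝ) := h1
        _ ≤ (4 * k * M ^ e + 1) * (k.factorial : ℝ) := by
            apply mul_le_mul_of_nonneg_right hchoose (le_of_lt hkf)
        _ = (k.factorial : ℝ) * (4 * k * M ^ e + 1) := by ring
    refine h2.trans ?_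
    rw [hA]
    have hmain : 4 * (k : ℝ) * M ^ e + 1 ≤ (4 * k + 1) * M ^ e := by nlinarith
    calc (k.factorial : ℝ) * (4 * k * M ^ e + 1)
        ≤ (k.factorial : ℝ) * ((4 * k + 1) * M ^ e) :=
          mul_le_mul_of_nonneg_left hmain (by positivity)
      _ = (k.factorial : ℝ) * (4 * k + 1) * M ^ e := by ring
  have hx : (((n + 1 - k : ℕ) : ℝ)) ≤ A ^ ((1:ℝ)/k) * M ^ (e * ((1:ℝ)/k)) := by
    have hxnn : (0 : ℝ) ≤ ((n + 1 - k : ℕ) : ℝ) := Nat.cast_nonneg _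
    have h1 : ((((n + 1 - k : ℕ) : ℝ)) ^ k) ^ ((1:ℝ)/k) ≤ (A * M ^ e) ^ ((1:ℝ)/k) :=
      Real.rpow_le_rpow (by positivity) hpow (by positivity)
    have h2 : ((((n + 1 - k : ℕ) : ℝ)) ^ k) ^ ((1:ℝ)/k) = ((n + 1 - k : ℕ) : ℝ) := by
      rw [← Real.rpow_natCast _ k, ← Real.rpow_mul hxnn]
      rw [mul_one_div, div_self (by positivity : ((k:ℝ)) ≠ 0), Real.rpow_one]
    have h3 : (A * M ^ e) ^ ((1:ℝ)/k) = A ^ ((1:ℝ)/k) * M ^ (e * ((1:ℝ)/k)) := by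
      rw [Real.mul_rpow hApos.le (by positivity), ← Real.rpow_mul hM0.le]
    rw [h2, h3] at h1
    exact h1
  have hexp : e * ((1:ℝ)/k) = (2 * k - 1 : ℝ) / (2 * k) := by
    rw [he]
    field_simp
  rw [hexp] at hx
  have hMe1' : (1 : ℝ) ≤ M ^ ((2 * k - 1 : ℝ) / (2 * k)) :=
    Real.one_le_rpow (by linarith) (div_nonneg (by linarith) (by positivity))
  have hnle : (n : ℝ) ≤ ((n + 1 - k : ℕ) : ℝ) + ((k : ℝ) - 1) := by
    have : n ≤ (n + 1 - k) + (k - 1) := by omega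
    have h := Nat.cast_le (α := ℝ).mpr this
    push_cast at h
    -- careful with ℕ subtraction casts
    calc (n : ℝ) ≤ (((n + 1 - k) + (k - 1) : ℕ) : ℝ) := by exact_mod_cast this
      _ = ((n + 1 - k : ℕ) : ℝ) + ((k - 1 : ℕ) : ℝ) := by push_cast; ring
      _ ≤ ((n + 1 - k : ℕ) : ℝ) + ((k : ℝ) - 1) := by
          have : ((k - 1 : ℕ) : ℝ) = (k : ℝ) - 1 := by
            rw [Nat.cast_sub hk]; norm_num
          rw [this]
  calc (n : ℝ) ≤ ((n + 1 - k : ℕ) : ℝ) + ((k : ℝ) - 1) := hnle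
    _ ≤ A ^ ((1:ℝ)/k) * M ^ ((2 * k - 1 : ℝ) / (2 * k)) + ((k : ℝ) - 1) := by linarith
    _ ≤ (A ^ ((1:ℝ)/k) + ((k : ℝ) - 1)) * M ^ ((2 * k - 1 : ℝ) / (2 * k)) := by
        have h1 : (0:ℝ) ≤ (k : ℝ) - 1 := by linarith
        nlinarith [Real.rpow_nonneg hApos.le ((1:ℝ)/k)]
end

section
/- Let P be a set of primes and D ⊆ P a maximal admissible subset with |D| ≥ 2k. Then for every prime p ∈ P \ D there exist primes p_1,…,p_{2k-1} ∈ D such that a(p) = Σ_{i=1}^{k} a(p_i) − Σ_{i=k+1}^{2k-1} a(p_i). -/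
lemma injOn_of_inc {f : ℕ → ℕ} {m n : ℕ}
    (hf : ∀ i j, m ≤ i → i < j → j ≤ n → f i < f j) :
    ∀ i ∈ Finset.Icc m n, ∀ j ∈ Finset.Icc m n, f i = f j → i = j := by
  intro i hi j hj hfe
  simp only [Finset.mem_Icc] at hi hj
  rcases lt_trichotomy i j with h | h | h
  · exact absurd hfe (hf i j hi.1 h hj.2).ne
  · exact h
  · exact absurd hfe.symm (hf j i hj.1 h hi.2).ne

lemma sum_of_image {f : ℕ → ℕ} {m n : ℕ} {A : Finset ℕ} (g : ℕ → ℤ)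
    (hf : ∀ i j, m ≤ i → i < j → j ≤ n → f i < f j)
    (him : (Finset.Icc m n).image f = A) :
    ∑ i ∈ Finset.Icc m n, g (f i) = ∑ x ∈ A, g x := by
  rw [← him, Finset.sum_image (injOn_of_inc hf)]

lemma enum_exists (A : Finset ℕ) (n : ℕ) (h : A.card = n) :
    ∃ f : ℕ → ℕ, (∀ i j, 1 ≤ i → i < j → j ≤ n → f i < f j) ∧
      (Finset.Icc 1 n).image f = A := by
  refine ⟨fun i => if h' : i - 1 < n then A.orderEmbOfFin h ⟨i - 1, h'⟩ else 0, ?_, ?_⟩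
  · intro i j hi hij hj
    have hi' : i - 1 < n := by omega
    have hj' : j - 1 < n := by omega
    simp only [dif_pos hi', dif_pos hj']
    exact (A.orderEmbOfFin h).strictMono (by simp only [Fin.mk_lt_mk]; omega)
  · ext x
    simp only [Finset.mem_image, Finset.mem_Icc]
    constructor
    · rintro ⟨i, ⟨hi1, hi2⟩, rfl⟩
      have h' : i - 1 < n := by omega
      simp only [dif_pos h']
      exact A.orderEmbOfFin_mem h _
    · intro hx
      have : x ∈ Set.range (A.orderEmbOfFin h) := by
        rw [Finset.range_orderEmbOfFin]; exact hx
      obtain ⟨m, hm⟩ := this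
      refine ⟨(m : ℕ) + 1, ⟨by omega, by omega⟩, ?_⟩
      have h' : (m : ℕ) + 1 - 1 < n := by omega
      simp only [dif_pos h']
      have : (⟨(m : ℕ) + 1 - 1, h'⟩ : Fin n) = m := by
        ext; simp
      rw [this, hm]

lemma eq_of_inc_image_eq {f g : ℕ → ℕ} {n : ℕ} {A : Finset ℕ}
    (hf : ∀ i j, 1 ≤ i → i < j → j ≤ n → f i < f j)
    (hg : ∀ i j, 1 ≤ i → i < j → j ≤ n → g i < g j)
    (hfA : (Finset.Icc 1 n).image f = A)
    (hgA : (Finset.Icc 1 n).image g = A)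
    (hcard : A.card = n) :
    ∀ i ∈ Finset.Icc 1 n, f i = g i := by
  have key : ∀ (F : ℕ → ℕ), (∀ i j, 1 ≤ i → i < j → j ≤ n → F i < F j) →
      (Finset.Icc 1 n).image F = A →
      (fun i : Fin n => F ((i : ℕ) + 1)) = A.orderEmbOfFin hcard := by
    intro F hF hFA
    apply Finset.orderEmbOfFin_unique
    · intro x
      rw [← hFA]
      exact Finset.mem_image_of_mem _ (by simp only [Finset.mem_Icc]; omega)
    · intro x y hxy
      exact hF _ _ (by omega) (by have := Fin.lt_def.mp hxy; omega) (by have := y.isLt; omega)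
  have hfe := key f hf hfA
  have hge := key g hg hgA
  intro i hi
  simp only [Finset.mem_Icc] at hi
  have h' : i - 1 < n := by omega
  have h1 : f (i - 1 + 1) = A.orderEmbOfFin hcard ⟨i - 1, h'⟩ := congrFun hfe ⟨i - 1, h'⟩
  have h2 : g (i - 1 + 1) = A.orderEmbOfFin hcard ⟨i - 1, h'⟩ := congrFun hge ⟨i - 1, h'⟩
  have hi' : i - 1 + 1 = i := by omega
  rw [hi'] at h1 h2
  rw [h1, h2]

lemma adm_sets {k : ℕ} {a : ℕ → ℤ} {D : Finset ℕ} (hadm : Admissible k a D)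
    {A B : Finset ℕ} (hA : A ⊆ D) (hB : B ⊆ D) (hAc : A.card = k) (hBc : B.card = k)
    (hne : A ≠ B) : ∑ x ∈ A, a x ≠ ∑ x ∈ B, a x := by
  obtain ⟨f, hf, hfA⟩ := enum_exists A k hAc
  obtain ⟨g, hg, hgB⟩ := enum_exists B k hBc
  set q : ℕ → ℕ := fun i => if i ≤ k then f i else g (i - k) with hq
  have hq1 : ∀ i ∈ Finset.Icc 1 k, q i = f i := by
    intro i hi
    simp only [Finset.mem_Icc] at hi
    simp only [hq, if_pos hi.2]
  have hq2 : ∀ i ∈ Finset.Icc 1 k, q (k + i) = g i := by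
    intro i hi
    simp only [Finset.mem_Icc] at hi
    simp only [hq]
    rw [if_neg (by omega)]
    congr 1
    omega
  have hsum1 : ∑ i ∈ Finset.Icc 1 k, a (q i) = ∑ x ∈ A, a x := by
    rw [Finset.sum_congr rfl (fun i hi => by rw [hq1 i hi])]
    exact sum_of_image a hf hfA
  have hsum2 : ∑ i ∈ Finset.Icc (k + 1) (2 * k), a (q i) = ∑ x ∈ B, a x := by
    have hmap : Finset.Icc (k + 1) (2 * k) =
        (Finset.Icc 1 k).map (addLeftEmbedding k) := by
      rw [Finset.map_add_left_Icc]
      congr 1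
      omega
    rw [hmap, Finset.sum_map]
    rw [Finset.sum_congr rfl (fun i hi => by
      show a (q (k + i)) = a (g i)
      rw [hq2 i hi])]
    exact sum_of_image a hg hgB
  have := hadm q ?_ ?_ ?_ ?_
  · rw [hsum1, hsum2] at this
    exact this
  · intro i hi
    simp only [Finset.mem_Icc] at hi
    by_cases hik : i ≤ k
    · have : q i = f i := by simp only [hq, if_pos hik]
      rw [this]
      apply hA
      rw [← hfA]
      exact Finset.mem_image_of_mem _ (by simp only [Finset.mem_Icc]; omega)
    · have : q i = g (i - k) := by simp only [hq, if_neg hik]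
      rw [this]
      apply hB
      rw [← hgB]
      exact Finset.mem_image_of_mem _ (by simp only [Finset.mem_Icc]; omega)
  · intro i j hi hij hj
    simp only [hq, if_pos (by omega : i ≤ k), if_pos hj]
    exact hf i j hi hij hj
  · intro i j hi hij hj
    simp only [hq, if_neg (by omega : ¬ i ≤ k), if_neg (by omega : ¬ j ≤ k)]
    exact hg (i - k) (j - k) (by omega) (by omega) (by omega)
  · by_contra hcon
    push_neg at hcon
    apply hne
    rw [← hfA, ← hgB]
    apply Finset.image_congr
    intro i hi
    have h1 := hq1 i hi
    have h2 := hq2 i hi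
    have h3 := hcon i hi
    rw [← h1, ← h2, h3]

lemma build {k : ℕ} (hk : 1 ≤ k) (a : ℕ → ℤ) {D S T : Finset ℕ}
    (hS : S ⊆ D) (hT : T ⊆ D) (hSc : S.card = k) (hTc : T.card = k - 1)
    (v : ℤ) (hv : v = ∑ x ∈ S, a x - ∑ x ∈ T, a x) :
    ∃ q : ℕ → ℕ, (∀ i ∈ Finset.Icc 1 (2 * k - 1), q i ∈ D) ∧
      v = ∑ i ∈ Finset.Icc 1 k, a (q i)
        - ∑ i ∈ Finset.Icc (k + 1) (2 * k - 1), a (q i) := by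
  obtain ⟨f, hf, hfS⟩ := enum_exists S k hSc
  obtain ⟨g, hg, hgT⟩ := enum_exists T (k - 1) hTc
  refine ⟨fun i => if i ≤ k then f i else g (i - k), ?_, ?_⟩
  · intro i hi
    simp only [Finset.mem_Icc] at hi
    show (if i ≤ k then f i else g (i - k)) ∈ D
    by_cases hik : i ≤ k
    · rw [if_pos hik]
      apply hS
      rw [← hfS]
      exact Finset.mem_image_of_mem _ (by simp only [Finset.mem_Icc]; omega)
    · rw [if_neg hik]
      apply hT
      rw [← hgT]
      exact Finset.mem_image_of_mem _ (by simp only [Finset.mem_Icc]; omega)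
  · have hsum1 : ∑ i ∈ Finset.Icc 1 k,
        a (if i ≤ k then f i else g (i - k)) = ∑ x ∈ S, a x := by
      rw [Finset.sum_congr rfl (fun i hi => by
        simp only [Finset.mem_Icc] at hi
        rw [if_pos hi.2])]
      exact sum_of_image a hf hfS
    have hsum2 : ∑ i ∈ Finset.Icc (k + 1) (2 * k - 1),
        a (if i ≤ k then f i else g (i - k)) = ∑ x ∈ T, a x := by
      have hmap : Finset.Icc (k + 1) (2 * k - 1) =
          (Finset.Icc 1 (k - 1)).map (addLeftEmbedding k) := by
        rw [Finset.map_add_left_Icc]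
        congr 1
        omega
      rw [hmap, Finset.sum_map]
      rw [Finset.sum_congr rfl (fun i hi => by
        simp only [Finset.mem_Icc] at hi
        show a (if k + i ≤ k then f (k + i) else g (k + i - k)) = a (g i)
        rw [if_neg (by omega)]
        congr 2
        omega)]
      exact sum_of_image a hg hgT
    rw [hsum1, hsum2, hv]

/-- if `D ⊆ P` is a maximal admissible subset with `|D| ≥ 2k`, then every
prime `p ∈ P \ D` has `a p` equal to a signed sum of `2k-1` coefficients from `D`. -/
theorem stmt_5 (k : ℕ) (hk : 1 ≤ k) (a : ℕ → ℤ) (P : Set ℕ)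
    (hP : ∀ p ∈ P, Nat.Prime p) (D : Finset ℕ) (hDP : ↑D ⊆ P)
    (hDadm : Admissible k a D) (hDcard : 2 * k ≤ D.card)
    (hmax : ∀ p ∈ P, p ∉ D → ¬ Admissible k a (insert p D)) :
    ∀ p ∈ P, p ∉ D →
      ∃ q : ℕ → ℕ, (∀ i ∈ Finset.Icc 1 (2 * k - 1), q i ∈ D) ∧
        a p = ∑ i ∈ Finset.Icc 1 k, a (q i)
          - ∑ i ∈ Finset.Icc (k + 1) (2 * k - 1), a (q i) := by
  intro p hp hpD
  have hnadm := hmax p hp hpD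
  rw [Admissible] at hnadm
  push_neg at hnadm
  obtain ⟨q, hmem, hinc1, hinc2, hdiff, hsum⟩ := hnadm
  -- the two halves as sets
  set A : Finset ℕ := (Finset.Icc 1 k).image q with hA
  set g : ℕ → ℕ := fun i => q (k + i) with hgdef
  set B : Finset ℕ := (Finset.Icc 1 k).image g with hB
  have hginc : ∀ i j, 1 ≤ i → i < j → j ≤ k → g i < g j := by
    intro i j hi hij hj
    exact hinc2 (k + i) (k + j) (by omega) (by omega) (by omega)
  have hcard1 : (Finset.Icc 1 k).card = k := by
    rw [Nat.card_Icc]; omega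
  have hAc : A.card = k := by
    rw [hA, Finset.card_image_of_injOn, hcard1]
    intro i hi j hj hij
    exact injOn_of_inc hinc1 i (by simpa using hi) j (by simpa using hj) hij
  have hBc : B.card = k := by
    rw [hB, Finset.card_image_of_injOn, hcard1]
    intro i hi j hj hij
    exact injOn_of_inc hginc i (by simpa using hi) j (by simpa using hj) hij
  have hAsub : A ⊆ insert p D := by
    rw [hA]
    intro x hx
    obtain ⟨i, hi, rfl⟩ := Finset.mem_image.mp hx
    simp only [Finset.mem_Icc] at hi
    exact hmem i (by simp only [Finset.mem_Icc]; omega)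
  have hBsub : B ⊆ insert p D := by
    rw [hB]
    intro x hx
    obtain ⟨i, hi, rfl⟩ := Finset.mem_image.mp hx
    simp only [Finset.mem_Icc] at hi
    exact hmem (k + i) (by simp only [Finset.mem_Icc]; omega)
  have hsumA : ∑ x ∈ A, a x = ∑ i ∈ Finset.Icc 1 k, a (q i) :=
    (sum_of_image a hinc1 rfl).symm
  have hsumB : ∑ x ∈ B, a x = ∑ i ∈ Finset.Icc (k + 1) (2 * k), a (q i) := by
    rw [← sum_of_image a hginc (rfl : (Finset.Icc 1 k).image g = B)]
    have hmap : Finset.Icc (k + 1) (2 * k) =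
        (Finset.Icc 1 k).map (addLeftEmbedding k) := by
      rw [Finset.map_add_left_Icc]
      congr 1
      omega
    rw [hmap, Finset.sum_map]
    rfl
  have hAB : ∑ x ∈ A, a x = ∑ x ∈ B, a x := by
    rw [hsumA, hsumB]; exact hsum
  have hne : A ≠ B := by
    intro hcon
    obtain ⟨i, hi, hqi⟩ := hdiff
    exact hqi (eq_of_inc_image_eq hinc1 hginc rfl (by rw [← hB]; exact hcon.symm) hAc i hi)
  have hsubD : ∀ {S : Finset ℕ}, S ⊆ insert p D → p ∉ S → S ⊆ D := by
    intro S hSsub hpS x hx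
    rcases Finset.mem_insert.mp (hSsub hx) with h | h
    · exact absurd (h ▸ hx) hpS
    · exact h
  by_cases hpA : p ∈ A <;> by_cases hpB : p ∈ B
  · -- p in both halves: contradiction with admissibility of D
    exfalso
    have hfresh : ∃ d ∈ D, d ∉ A ∪ B := by
      by_contra hcon
      push_neg at hcon
      have hsub : D ⊆ (A ∪ B).erase p := by
        intro x hx
        exact Finset.mem_erase.mpr ⟨fun h => hpD (h ▸ hx), hcon x hx⟩
      have h1 : D.card ≤ ((A ∪ B).erase p).card := Finset.card_le_card hsub
      have h2 : ((A ∪ B).erase p).card = (A ∪ B).card - 1 :=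
        Finset.card_erase_of_mem (Finset.mem_union_left _ hpA)
      have h3 : (A ∪ B).card ≤ A.card + B.card := Finset.card_union_le _ _
      omega
    obtain ⟨d, hdD, hdAB⟩ := hfresh
    have hdA : d ∉ A.erase p := fun h =>
      hdAB (Finset.mem_union_left _ (Finset.mem_of_mem_erase h))
    have hdB : d ∉ B.erase p := fun h =>
      hdAB (Finset.mem_union_right _ (Finset.mem_of_mem_erase h))
    set A' : Finset ℕ := insert d (A.erase p) with hA'
    set B' : Finset ℕ := insert d (B.erase p) with hB'
    have hA'c : A'.card = k := by
      rw [hA', Finset.card_insert_of_notMem hdA, Finset.card_erase_of_mem hpA, hAc]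
      omega
    have hB'c : B'.card = k := by
      rw [hB', Finset.card_insert_of_notMem hdB, Finset.card_erase_of_mem hpB, hBc]
      omega
    have hA'sub : A' ⊆ D := by
      intro x hx
      rcases Finset.mem_insert.mp hx with h | h
      · exact h ▸ hdD
      · exact hsubD ((Finset.erase_subset p A).trans hAsub) (Finset.notMem_erase p A) h
    have hB'sub : B' ⊆ D := by
      intro x hx
      rcases Finset.mem_insert.mp hx with h | h
      · exact h ▸ hdD
      · exact hsubD ((Finset.erase_subset p B).trans hBsub) (Finset.notMem_erase p B) h
    have hA'ne : A' ≠ B' := by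
      intro hcon
      apply hne
      have h1 : A.erase p = B.erase p := by
        have := congrArg (fun s => Finset.erase s d) hcon
        simpa [hA', hB', Finset.erase_insert hdA, Finset.erase_insert hdB] using this
      rw [← Finset.insert_erase hpA, ← Finset.insert_erase hpB, h1]
    have hA'sum : ∑ x ∈ A', a x = ∑ x ∈ B', a x := by
      rw [hA', hB', Finset.sum_insert hdA, Finset.sum_insert hdB,
        Finset.sum_erase_eq_sub hpA, Finset.sum_erase_eq_sub hpB, hAB]
    exact adm_sets hDadm hA'sub hB'sub hA'c hB'c hA'ne hA'sum
  · -- p ∈ A, p ∉ B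
    have hBD : B ⊆ D := hsubD hBsub hpB
    have hTD : A.erase p ⊆ D := hsubD ((Finset.erase_subset p A).trans hAsub) (Finset.notMem_erase p A)
    have hTc : (A.erase p).card = k - 1 := by
      rw [Finset.card_erase_of_mem hpA, hAc]
    exact build hk a hBD hTD hBc hTc (a p) (by
      rw [Finset.sum_erase_eq_sub hpA, ← hAB]; ring)
  · -- p ∉ A, p ∈ B
    have hAD : A ⊆ D := hsubD hAsub hpA
    have hTD : B.erase p ⊆ D := hsubD ((Finset.erase_subset p B).trans hBsub) (Finset.notMem_erase p B)
    have hTc : (B.erase p).card = k - 1 := by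
      rw [Finset.card_erase_of_mem hpB, hBc]
    exact build hk a hAD hTD hAc hTc (a p) (by
      rw [Finset.sum_erase_eq_sub hpB, ← hAB]; ring)
  · -- p in neither: contradiction with admissibility of D
    exact absurd hAB (adm_sets hDadm (hsubD hAsub hpA) (hsubD hBsub hpB) hAc hBc hne)
end

section
/- If a maximal admissible set D of primes has |D| ≥ 2k, and p ∉ D is a prime such that D ∪ {p} is not admissible, then in any witnessing pair of k-tuples from D ∪ {p} with equal a-sums, the prime p occurs exactly once (it cannot occur in both tuples). -/
/-- The image of `orderEmbOfFin` is the whole set. -/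
lemma image_orderEmbOfFin {s : Finset ℕ} {k : ℕ} (h : s.card = k) :
    Finset.image (s.orderEmbOfFin h) Finset.univ = s := by
  apply Finset.eq_of_subset_of_card_le
  · intro x hx
    simp only [Finset.mem_image] at hx
    obtain ⟨j, _, rfl⟩ := hx
    exact s.orderEmbOfFin_mem h j
  · rw [Finset.card_image_of_injective _ (s.orderEmbOfFin h).injective]
    simp [h]

/-- Sum over a set expressed via its monotone enumeration. -/
lemma sum_orderEmbOfFin (a : ℕ → ℤ) {s : Finset ℕ} {k : ℕ} (h : s.card = k) :
    ∑ j : Fin k, a (s.orderEmbOfFin h j) = ∑ x ∈ s, a x := by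
  conv_rhs => rw [← image_orderEmbOfFin h]
  rw [Finset.sum_image]
  intro x _ y _ hxy
  exact (s.orderEmbOfFin h).injective hxy

/-- Key lemma: two distinct `k`-subsets of `D` with equal `a`-sums contradict
admissibility of `D`. -/
lemma key (k : ℕ) (a : ℕ → ℤ) (D : Finset ℕ) (hDadm : Admissible k a D)
    (A B : Finset ℕ) (hA : A ⊆ D) (hB : B ⊆ D) (hAc : A.card = k) (hBc : B.card = k)
    (hne : A ≠ B) (hs : ∑ x ∈ A, a x = ∑ x ∈ B, a x) : False := by
  set f := A.orderEmbOfFin hAc with hf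
  set g := B.orderEmbOfFin hBc with hg
  set q' : ℕ → ℕ := fun i =>
    if h1 : 1 ≤ i ∧ i ≤ k then f (⟨i - 1, by omega⟩ : Fin k)
    else if h2 : k + 1 ≤ i ∧ i ≤ 2 * k then g (⟨i - (k + 1), by omega⟩ : Fin k) else 0 with hq'
  have hq1 : ∀ i, (h1 : 1 ≤ i) → (h2 : i ≤ k) → q' i = f (⟨i - 1, by omega⟩ : Fin k) := by
    intro i h1 h2
    simp only [hq', dif_pos (And.intro h1 h2)]
  have hq2 : ∀ i, (h1 : k + 1 ≤ i) → (h2 : i ≤ 2 * k) → q' i = g (⟨i - (k + 1), by omega⟩ : Fin k) := by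
    intro i h1 h2
    have : ¬ (1 ≤ i ∧ i ≤ k) := by omega
    simp only [hq', dif_neg this, dif_pos (And.intro h1 h2)]
  have hsum1 : ∑ i ∈ Finset.Icc 1 k, a (q' i) = ∑ x ∈ A, a x := by
    rw [← sum_orderEmbOfFin a hAc]
    apply Finset.sum_bij (i := fun i hi => (⟨i - 1, by simp at hi; omega⟩ : Fin k))
    · intro i hi; exact Finset.mem_univ _
    · intro i hi j hj hij
      simp only [Finset.mem_Icc] at hi hj
      simp only [Fin.mk.injEq] at hij
      omega
    · intro j _
      refine ⟨j.val + 1, Finset.mem_Icc.2 ⟨by omega, by omega⟩, ?_⟩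
      simp
    · intro i hi
      simp only [Finset.mem_Icc] at hi
      rw [hq1 i hi.1 hi.2]
  have hsum2 : ∑ i ∈ Finset.Icc (k + 1) (2 * k), a (q' i) = ∑ x ∈ B, a x := by
    rw [← sum_orderEmbOfFin a hBc]
    apply Finset.sum_bij (i := fun i hi => (⟨i - (k + 1), by simp at hi; omega⟩ : Fin k))
    · intro i hi; exact Finset.mem_univ _
    · intro i hi j hj hij
      simp only [Finset.mem_Icc] at hi hj
      simp only [Fin.mk.injEq] at hij
      omega
    · intro j _
      refine ⟨j.val + (k + 1), Finset.mem_Icc.2 ⟨by omega, by omega⟩, ?_⟩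
      simp
    · intro i hi
      simp only [Finset.mem_Icc] at hi
      rw [hq2 i hi.1 hi.2]
  have hfg : ∃ j : Fin k, f j ≠ g j := by
    by_contra hcon
    push_neg at hcon
    apply hne
    rw [← image_orderEmbOfFin hAc, ← image_orderEmbOfFin hBc]
    exact Finset.image_congr (fun x _ => hcon x)
  obtain ⟨j, hj⟩ := hfg
  apply hDadm q'
  · intro i hi
    simp only [Finset.mem_Icc] at hi
    by_cases h1 : i ≤ k
    · rw [hq1 i hi.1 h1]; exact hA (A.orderEmbOfFin_mem hAc _)
    · rw [hq2 i (by omega) hi.2]; exact hB (B.orderEmbOfFin_mem hBc _)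
  · intro i j h1 h2 h3
    rw [hq1 i h1 (by omega), hq1 j (by omega) h3]
    exact f.strictMono (by simp [Fin.lt_def]; omega)
  · intro i j h1 h2 h3
    rw [hq2 i h1 (by omega), hq2 j (by omega) h3]
    exact g.strictMono (by simp [Fin.lt_def]; omega)
  · refine ⟨j.val + 1, Finset.mem_Icc.2 ⟨by omega, by omega⟩, ?_⟩
    rw [hq1 (j.val + 1) (by omega) (by omega), hq2 (k + (j.val + 1)) (by omega) (by omega)]
    have e1 : (⟨j.val + 1 - 1, by omega⟩ : Fin k) = j := by ext; simp
    have e2 : (⟨k + (j.val + 1) - (k + 1), by omega⟩ : Fin k) = j := by ext; simp; omega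
    rw [e1, e2]; exact hj
  · rw [hsum1, hsum2]; exact hs

/-- if `D` is admissible with `|D| ≥ 2k` and `p ∉ D` is a prime such that
`insert p D` is not admissible, then in any witnessing pair of increasing `k`-tuples
from `D ∪ {p}` with equal `a`-sums, the prime `p` occurs exactly once: it occurs in
some tuple, but not in both tuples. -/
theorem stmt_6 (k : ℕ) (hk : 1 ≤ k) (a : ℕ → ℤ) (D : Finset ℕ)
    (hD : ∀ q ∈ D, Nat.Prime q) (hDadm : Admissible k a D) (hDcard : 2 * k ≤ D.card)
    (p : ℕ) (hp : Nat.Prime p) (hpD : p ∉ D)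
    (hnotadm : ¬ Admissible k a (insert p D))
    (q : ℕ → ℕ)
    (hmem : ∀ i ∈ Finset.Icc 1 (2 * k), q i ∈ insert p D)
    (hmono₁ : ∀ i j, 1 ≤ i → i < j → j ≤ k → q i < q j)
    (hmono₂ : ∀ i j, k + 1 ≤ i → i < j → j ≤ 2 * k → q i < q j)
    (hdist : ∃ i ∈ Finset.Icc 1 k, q i ≠ q (k + i))
    (hsum : ∑ i ∈ Finset.Icc 1 k, a (q i) = ∑ i ∈ Finset.Icc (k + 1) (2 * k), a (q i)) :
    (∃ i ∈ Finset.Icc 1 (2 * k), q i = p) ∧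
    ¬ ((∃ i ∈ Finset.Icc 1 k, q i = p) ∧ (∃ i ∈ Finset.Icc (k + 1) (2 * k), q i = p)) := by
  constructor
  · by_contra hcon
    push_neg at hcon
    exact hDadm q
      (fun i hi => (Finset.mem_insert.1 (hmem i hi)).resolve_left (hcon i hi))
      hmono₁ hmono₂ hdist hsum
  · rintro ⟨⟨i₀, hi₀, hi₀p⟩, ⟨j₀, hj₀, hj₀p⟩⟩
    simp only [Finset.mem_Icc] at hi₀ hj₀
    -- two strictly monotone enumerations
    set g1 : Fin k → ℕ := fun j => q (j.val + 1) with hg1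
    set g2 : Fin k → ℕ := fun j => q (k + 1 + j.val) with hg2
    have hg1mono : StrictMono g1 := by
      intro x y hxy
      have hxy' : x.val < y.val := hxy
      exact hmono₁ _ _ (by omega) (by omega) (by omega)
    have hg2mono : StrictMono g2 := by
      intro x y hxy
      have hxy' : x.val < y.val := hxy
      exact hmono₂ _ _ (by omega) (by omega) (by omega)
    set A : Finset ℕ := Finset.image g1 Finset.univ with hA
    set B : Finset ℕ := Finset.image g2 Finset.univ with hB
    have hAc : A.card = k := by
      rw [hA, Finset.card_image_of_injective _ hg1mono.injective, Finset.card_univ,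
        Fintype.card_fin]
    have hBc : B.card = k := by
      rw [hB, Finset.card_image_of_injective _ hg2mono.injective, Finset.card_univ,
        Fintype.card_fin]
    have hAmem : ∀ x ∈ A, x ∈ insert p D := by
      intro x hx
      simp only [hA, Finset.mem_image] at hx
      obtain ⟨j, _, rfl⟩ := hx
      exact hmem _ (Finset.mem_Icc.2 ⟨by omega, by omega⟩)
    have hBmem : ∀ x ∈ B, x ∈ insert p D := by
      intro x hx
      simp only [hB, Finset.mem_image] at hx
      obtain ⟨j, _, rfl⟩ := hx
      exact hmem _ (Finset.mem_Icc.2 ⟨by omega, by omega⟩)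
    have hpA : p ∈ A := by
      rw [hA]
      refine Finset.mem_image.2 ⟨⟨i₀ - 1, ?_⟩, Finset.mem_univ _, ?_⟩
      · omega
      · simp only [hg1]
        rw [show i₀ - 1 + 1 = i₀ by omega, hi₀p]
    have hpB : p ∈ B := by
      rw [hB]
      refine Finset.mem_image.2 ⟨⟨j₀ - (k + 1), ?_⟩, Finset.mem_univ _, ?_⟩
      · omega
      · simp only [hg2]
        rw [show k + 1 + (j₀ - (k + 1)) = j₀ by omega, hj₀p]
    -- A ≠ B from hdist
    have hAB : A ≠ B := by
      intro hEq
      have h1 : g1 = A.orderEmbOfFin hAc := Finset.orderEmbOfFin_unique hAc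
        (fun x => Finset.mem_image.2 ⟨x, Finset.mem_univ _, rfl⟩) hg1mono
      have h2 : g2 = A.orderEmbOfFin hAc := Finset.orderEmbOfFin_unique hAc
        (fun x => hEq ▸ Finset.mem_image.2 ⟨x, Finset.mem_univ _, rfl⟩) hg2mono
      obtain ⟨i, hi, hne⟩ := hdist
      simp only [Finset.mem_Icc] at hi
      apply hne
      have := congrFun (h1.trans h2.symm) ⟨i - 1, by omega⟩
      simp only [hg1, hg2] at this
      have e1 : i - 1 + 1 = i := by omega
      have e2 : k + 1 + (i - 1) = k + i := by omega
      rwa [e1, e2] at this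
    -- sums over A, B
    have hsA : ∑ i ∈ Finset.Icc 1 k, a (q i) = ∑ x ∈ A, a x := by
      rw [hA, Finset.sum_image (fun x _ y _ h => hg1mono.injective h)]
      apply Finset.sum_bij (i := fun i hi => (⟨i - 1, by simp at hi; omega⟩ : Fin k))
      · intro i hi; exact Finset.mem_univ _
      · intro i hi j hj hij
        simp only [Finset.mem_Icc] at hi hj
        simp only [Fin.mk.injEq] at hij
        omega
      · intro j _
        exact ⟨j.val + 1, Finset.mem_Icc.2 ⟨by omega, by omega⟩, by simp⟩
      · intro i hi
        simp only [Finset.mem_Icc] at hi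
        simp only [hg1]
        congr 2
        omega
    have hsB : ∑ i ∈ Finset.Icc (k + 1) (2 * k), a (q i) = ∑ x ∈ B, a x := by
      rw [hB, Finset.sum_image (fun x _ y _ h => hg2mono.injective h)]
      apply Finset.sum_bij (i := fun i hi => (⟨i - (k + 1), by simp at hi; omega⟩ : Fin k))
      · intro i hi; exact Finset.mem_univ _
      · intro i hi j hj hij
        simp only [Finset.mem_Icc] at hi hj
        simp only [Fin.mk.injEq] at hij
        omega
      · intro j _
        exact ⟨k + 1 + j.val, Finset.mem_Icc.2 ⟨by omega, by omega⟩, by simp⟩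
      · intro i hi
        simp only [Finset.mem_Icc] at hi
        simp only [hg2]
        congr 2
        omega
    -- find a fresh r ∈ D avoiding A ∪ B
    have hfresh : ∃ r ∈ D, r ∉ A ∪ B := by
      by_contra hcon
      push_neg at hcon
      have hsub : D ⊆ (A ∪ B).erase p := by
        intro x hx
        exact Finset.mem_erase.2 ⟨fun h => hpD (h ▸ hx), hcon x hx⟩
      have h1 : D.card ≤ ((A ∪ B).erase p).card := Finset.card_le_card hsub
      have h2 : ((A ∪ B).erase p).card = (A ∪ B).card - 1 :=
        Finset.card_erase_of_mem (Finset.mem_union_left _ hpA)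
      have h3 : (A ∪ B).card ≤ A.card + B.card := Finset.card_union_le _ _
      omega
    obtain ⟨r, hrD, hrAB⟩ := hfresh
    have hrA : r ∉ A := fun h => hrAB (Finset.mem_union_left _ h)
    have hrB : r ∉ B := fun h => hrAB (Finset.mem_union_right _ h)
    set A' : Finset ℕ := insert r (A.erase p) with hA'
    set B' : Finset ℕ := insert r (B.erase p) with hB'
    have hA'sub : A' ⊆ D := by
      intro x hx
      rcases Finset.mem_insert.1 hx with rfl | hx
      · exact hrD
      · obtain ⟨hxp, hxA⟩ := Finset.mem_erase.1 hx
        exact (Finset.mem_insert.1 (hAmem x hxA)).resolve_left hxp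
    have hB'sub : B' ⊆ D := by
      intro x hx
      rcases Finset.mem_insert.1 hx with rfl | hx
      · exact hrD
      · obtain ⟨hxp, hxB⟩ := Finset.mem_erase.1 hx
        exact (Finset.mem_insert.1 (hBmem x hxB)).resolve_left hxp
    have hA'c : A'.card = k := by
      rw [hA', Finset.card_insert_of_notMem (fun h => hrA (Finset.mem_of_mem_erase h)),
        Finset.card_erase_of_mem hpA, hAc]
      omega
    have hB'c : B'.card = k := by
      rw [hB', Finset.card_insert_of_notMem (fun h => hrB (Finset.mem_of_mem_erase h)),
        Finset.card_erase_of_mem hpB, hBc]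
      omega
    have hA'B' : A' ≠ B' := by
      intro hEq
      apply hAB
      have herase : A.erase p = B.erase p := by
        ext x
        constructor
        · intro hx
          have hxr : x ≠ r := fun h => hrA (h ▸ Finset.mem_of_mem_erase hx)
          have : x ∈ B' := hEq ▸ Finset.mem_insert_of_mem hx
          exact (Finset.mem_insert.1 this).resolve_left hxr
        · intro hx
          have hxr : x ≠ r := fun h => hrB (h ▸ Finset.mem_of_mem_erase hx)
          have : x ∈ A' := hEq ▸ Finset.mem_insert_of_mem hx
          exact (Finset.mem_insert.1 this).resolve_left hxr
      rw [← Finset.insert_erase hpA, ← Finset.insert_erase hpB, herase]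
    have hsums : ∑ x ∈ A', a x = ∑ x ∈ B', a x := by
      rw [hA', hB',
        Finset.sum_insert (fun h => hrA (Finset.mem_of_mem_erase h)),
        Finset.sum_insert (fun h => hrB (Finset.mem_of_mem_erase h)),
        Finset.sum_erase_eq_sub hpA, Finset.sum_erase_eq_sub hpB,
        ← hsA, ← hsB, hsum]
    exact key k a D hDadm A' B' hA'sub hB'sub hA'c hB'c hA'B' hsums
end

section
/- If t is the largest index 1 ≤ t ≤ k with q_t ≠ q_{k+t}, and Σ_{i=1}^k a(q_i) = Σ_{i=k+1}^{2k} a(q_i), then Σ_{i=1}^t a(q_i) = Σ_{i=k+1}^{k+t} a(q_i), and consequently |a(q_{k+t})| ≤ k(|a(q_t)| + |a(q_{k+t-1})|). -/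
/-- if `t` is the largest index `1 ≤ t ≤ k` with `q t ≠ q (k+t)` and the
two `k`-tuple sums agree, then the truncated sums up to `t` agree, and
`|a (q (k+t))| ≤ k (|a (q t)| + |a (q (k+t-1))|)`. -/
theorem stmt_8 (k : ℕ) (hk : 1 ≤ k) (a : ℕ → ℤ) (q : ℕ → ℕ)
    (hprime : ∀ i ∈ Finset.Icc 1 (2 * k), (q i).Prime)
    (hmono₁ : ∀ i j, 1 ≤ i → i < j → j ≤ k → q i < q j)
    (hmono₂ : ∀ i j, k + 1 ≤ i → i < j → j ≤ 2 * k → q i < q j)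
    (habs₁ : ∀ i j, 1 ≤ i → i < j → j ≤ k → |a (q i)| < |a (q j)|)
    (habs₂ : ∀ i j, k + 1 ≤ i → i < j → j ≤ 2 * k → |a (q i)| < |a (q j)|)
    (t : ℕ) (ht1 : 1 ≤ t) (htk : t ≤ k)
    (htne : q t ≠ q (k + t))
    (htmax : ∀ i, t < i → i ≤ k → q i = q (k + i))
    (hqt : q t < q (k + t))
    (hsum : ∑ i ∈ Finset.Icc 1 k, a (q i) = ∑ i ∈ Finset.Icc (k + 1) (2 * k), a (q i)) :
    (∑ i ∈ Finset.Icc 1 t, a (q i) = ∑ i ∈ Finset.Icc (k + 1) (k + t), a (q i)) ∧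
    |a (q (k + t))| ≤ (k : ℤ) * (|a (q t)| + |a (q (k + t - 1))|) := by
  have hIcc : ∀ n : ℕ, Finset.Icc 1 n = Finset.Ioc 0 n := fun n => Finset.Icc_add_one_left_eq_Ioc 0 n
  have hIcc2 : ∀ m n : ℕ, Finset.Icc (m + 1) n = Finset.Ioc m n := fun m n => Finset.Icc_add_one_left_eq_Ioc m n
  -- reindex the tail
  have h3 : ∑ i ∈ Finset.Ioc (k + t) (2 * k), a (q i) = ∑ i ∈ Finset.Ioc t k, a (q i) := by
    have hmap : Finset.Ioc (k + t) (2 * k) = (Finset.Ioc t k).map (addRightEmbedding k) := by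
      rw [Finset.map_add_right_Ioc]
      congr 1 <;> omega
    rw [hmap, Finset.sum_map]
    refine Finset.sum_congr rfl ?_
    intro i hi
    simp only [Finset.mem_Ioc] at hi
    have := htmax i hi.1 hi.2
    simp only [addRightEmbedding_apply]
    rw [show i + k = k + i by omega, ← this]
  have h1 := Finset.sum_Ioc_consecutive (fun i => a (q i)) (Nat.zero_le t) htk
  have h2 := Finset.sum_Ioc_consecutive (fun i => a (q i)) (by omega : k ≤ k + t)
    (by omega : k + t ≤ 2 * k)
  have key : ∑ i ∈ Finset.Icc 1 t, a (q i) = ∑ i ∈ Finset.Icc (k + 1) (k + t), a (q i) := by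
    rw [hIcc, hIcc2]
    rw [hIcc] at hsum; rw [hIcc2] at hsum
    linarith [h3]
  refine ⟨key, ?_⟩
  -- split off the top term
  have hsplit : ∑ i ∈ Finset.Icc (k + 1) (k + t), a (q i)
      = ∑ i ∈ Finset.Ioc k (k + t - 1), a (q i) + a (q (k + t)) := by
    rw [hIcc2, show k + t = (k + t - 1) + 1 by omega,
      Finset.sum_Ioc_succ_top (by omega : k ≤ k + t - 1)]
    simp
  have hbound1 : ∑ i ∈ Finset.Icc 1 t, |a (q i)| ≤ (t : ℤ) * |a (q t)| := by
    have := Finset.sum_le_card_nsmul (Finset.Icc 1 t) (fun i => |a (q i)|) |a (q t)| ?_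
    · simpa [Nat.card_Icc, nsmul_eq_mul, show t + 1 - 1 = t by omega] using this
    · intro i hi
      simp only [Finset.mem_Icc] at hi
      rcases eq_or_lt_of_le hi.2 with h | h
      · rw [h]
      · exact le_of_lt (habs₁ i t hi.1 h htk)
  have hbound2 : ∑ i ∈ Finset.Ioc k (k + t - 1), |a (q i)| ≤ ((t : ℤ) - 1) * |a (q (k + t - 1))| := by
    have := Finset.sum_le_card_nsmul (Finset.Ioc k (k + t - 1)) (fun i => |a (q i)|)
      |a (q (k + t - 1))| ?_
    · have hc : (Finset.Ioc k (k + t - 1)).card = t - 1 := by rw [Nat.card_Ioc]; omega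
      rw [hc, nsmul_eq_mul] at this
      calc ∑ i ∈ Finset.Ioc k (k + t - 1), |a (q i)| ≤ ((t - 1 : ℕ) : ℤ) * |a (q (k + t - 1))| := this
        _ = ((t : ℤ) - 1) * |a (q (k + t - 1))| := by
            congr 1; push_cast [Nat.cast_sub ht1]; ring
    · intro i hi
      simp only [Finset.mem_Ioc] at hi
      rcases eq_or_lt_of_le hi.2 with h | h
      · rw [h]
      · exact le_of_lt (habs₂ i (k + t - 1) (by omega) h (by omega))
  have habsS : |∑ i ∈ Finset.Icc 1 t, a (q i)| ≤ ∑ i ∈ Finset.Icc 1 t, |a (q i)| :=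
    Finset.abs_sum_le_sum_abs _ _
  have habsT : |∑ i ∈ Finset.Ioc k (k + t - 1), a (q i)| ≤ ∑ i ∈ Finset.Ioc k (k + t - 1), |a (q i)| :=
    Finset.abs_sum_le_sum_abs _ _
  have heq : a (q (k + t)) = (∑ i ∈ Finset.Icc 1 t, a (q i)) - ∑ i ∈ Finset.Ioc k (k + t - 1), a (q i) := by
    rw [key, hsplit]; ring
  have htri : |a (q (k + t))| ≤ |∑ i ∈ Finset.Icc 1 t, a (q i)| + |∑ i ∈ Finset.Ioc k (k + t - 1), a (q i)| := by
    rw [heq]; exact abs_sub _ _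
  have hnn1 : (0 : ℤ) ≤ |a (q t)| := abs_nonneg _
  have hnn2 : (0 : ℤ) ≤ |a (q (k + t - 1))| := abs_nonneg _
  have htk' : (t : ℤ) ≤ (k : ℤ) := by exact_mod_cast htk
  nlinarith [htri, habsS, habsT, hbound1, hbound2]
end

section
/- Suppose every sufficiently large integer Z (of either sign) with |Z| ≥ T can be represented as Z = Σ_{i=1}^{m} a(n_i) − Σ_{j=1}^{m} a(m_j) + r (0 ≤ r ≤ R, a(1) = 1) with all n_i, m_j coprime to n_f, where a(n_f) = −C₀ < 0 and a is multiplicative on coprime arguments. Then every sufficiently large integer Z₁ (of either sign) is a sum of at most (C₀+1)·m + C₀·R + C₀ values a(n). -/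
/-- Turn a list-sum representation into a `Finset.range` sum representation. -/
lemma sum_map_eq_range (a : ℕ → ℤ) : ∀ L : List ℕ,
    (L.map a).sum = ∑ j ∈ Finset.range L.length, a (L.getD j 1)
  | [] => by simp
  | x :: L => by
    rw [List.map_cons, List.sum_cons, sum_map_eq_range a L, List.length_cons,
      Finset.sum_range_succ']
    simp [add_comm]

lemma list_rep (a : ℕ → ℤ) (L : List ℕ) (hL : ∀ x ∈ L, 0 < x) :
    ∃ n : ℕ → ℕ, (∀ j, 0 < n j) ∧
      (L.map a).sum = ∑ j ∈ Finset.range L.length, a (n j) := by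
  refine ⟨fun j => L.getD j 1, ?_, sum_map_eq_range a L⟩
  intro j
  show 0 < L.getD j 1
  by_cases h : j < L.length
  · rw [List.getD_eq_getElem L 1 h]
    exact hL _ (List.getElem_mem h)
  · rw [List.getD_eq_default L 1 (le_of_not_gt h)]
    exact one_pos

/-- if every integer of sufficiently large absolute value has a signed
representation `Z = Σ a(n_i) − Σ a(m_j) + r` (`0 ≤ r ≤ R`) with all `n_i, m_j`
coprime to `n_f`, where `a n_f = −C₀ < 0` and `a` is multiplicative on coprime
arguments with `a 1 = 1`, then every integer of sufficiently large absolute value is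
a sum of at most `(C₀+1)·m + C₀·R + C₀` values `a(n)`. -/
theorem stmt_18 (a : ℕ → ℤ) (h1 : a 1 = 1)
    (hmul : ∀ u v : ℕ, Nat.Coprime u v → a (u * v) = a u * a v)
    (n_f : ℕ) (hnf : 1 < n_f) (C₀ : ℕ) (hC₀ : 0 < C₀) (hanf : a n_f = -(C₀ : ℤ))
    (T : ℤ) (hT : 0 < T) (R m : ℕ) (hm : 0 < m)
    (hrep : ∀ Z : ℤ, T ≤ |Z| →
      ∃ n mj : ℕ → ℕ, ∃ r : ℕ, r ≤ R ∧
        (∀ i ∈ Finset.range m, 0 < n i ∧ Nat.Coprime (n i) n_f) ∧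
        (∀ j ∈ Finset.range m, 0 < mj j ∧ Nat.Coprime (mj j) n_f) ∧
        Z = ∑ i ∈ Finset.range m, a (n i) - ∑ j ∈ Finset.range m, a (mj j) + r) :
    ∃ T₁ : ℤ, 0 < T₁ ∧ ∀ Z₁ : ℤ, T₁ ≤ |Z₁| →
      ∃ ℓ ≤ (C₀ + 1) * m + C₀ * R + C₀, ∃ n : ℕ → ℕ,
        (∀ j, 0 < n j) ∧ Z₁ = ∑ j ∈ Finset.range ℓ, a (n j) := by
  refine ⟨T, hT, ?_⟩
  intro Z₁ hZ₁
  obtain ⟨n, mj, r, hr, hn, hmj, hsum⟩ := hrep Z₁ hZ₁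
  set L : List ℕ :=
    List.replicate r 1 ++ List.ofFn (fun i : Fin m => n i) ++
      List.ofFn (fun i : Fin m => n_f * mj i) ++
      (List.replicate (C₀ - 1) (List.ofFn fun i : Fin m => mj i)).flatten with hLdef
  have hpos : ∀ x ∈ L, 0 < x := by
    intro x hx
    rw [hLdef] at hx
    simp only [List.mem_append, List.mem_replicate, List.mem_ofFn,
      List.mem_flatten] at hx
    rcases hx with ((h | ⟨i, hi⟩) | ⟨i, hi⟩) | ⟨l, hl, hxl⟩
    · omega
    · rw [← hi]; exact (hn i (Finset.mem_range.mpr i.2)).1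
    · rw [← hi]
      exact Nat.mul_pos (by omega) (hmj i (Finset.mem_range.mpr i.2)).1
    · rw [hl.2] at hxl
      simp only [List.mem_ofFn, Set.mem_range] at hxl
      obtain ⟨i, hi⟩ := hxl
      rw [← hi]; exact (hmj i (Finset.mem_range.mpr i.2)).1
  obtain ⟨nn, hnn, hrep'⟩ := list_rep a L hpos
  refine ⟨L.length, ?_, nn, hnn, ?_⟩
  · have hlen : L.length = r + m + m + m * (C₀ - 1) := by
      rw [hLdef]
      simp only [List.length_append, List.length_replicate, List.length_ofFn,
        List.length_flatten, List.map_replicate, List.sum_replicate, smul_eq_mul]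
      ring
    rw [hlen]
    have h2 : r ≤ C₀ * R := le_trans hr (Nat.le_mul_of_pos_left R hC₀)
    nlinarith [Nat.sub_add_cancel hC₀]
  · rw [← hrep', hLdef]
    have e1 : ∑ i ∈ Finset.range m, a (n_f * mj i)
        = -(C₀ : ℤ) * ∑ i ∈ Finset.range m, a (mj i) := by
      rw [Finset.mul_sum]
      refine Finset.sum_congr rfl fun i hi => ?_
      rw [hmul n_f (mj i) ((hmj i hi).2.symm), hanf]
    have hC : ((C₀ - 1 : ℕ) : ℤ) = (C₀ : ℤ) - 1 := by
      push_cast [Nat.cast_sub hC₀]; ring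
    simp only [List.map_append, List.sum_append, List.map_replicate, List.sum_replicate,
      List.map_flatten, List.map_ofFn, List.sum_flatten, List.sum_ofFn, Function.comp,
      smul_eq_mul, nsmul_eq_mul, h1, Fin.sum_univ_eq_sum_range]
    rw [Fin.sum_univ_eq_sum_range (fun i => a (n i)),
      Fin.sum_univ_eq_sum_range (fun i => a (n_f * mj i)),
      Fin.sum_univ_eq_sum_range (fun i => a (mj i))]
    rw [hsum, e1, hC]
    ring
end
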